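/- Fix integers n and k with n/2 < k ≤ n, and let X₁, X₂, … be i.i.d. uniform on [n] = {1,…,n}. Fix i ∈ [n], let τ_i be the least r ≥ 1 with X_r = i, and let W_k be the least r ≥ 1 such that |{X₁,…,X_r}| ≥ k. Then E[min(τ_i, W_k)] = k. -/

import Mathlib

open MeasureTheory Finset
open scoped ENNReal

/-- The first time `r ≥ 1` (as an element of `[0,∞]`, with value `∞` if there is no such time)
at which the condition `cond r ω` holds. -/
noncomputable def firstTime {Ω : Type*} (cond : ℕ → Ω → Prop) (ω : Ω) : ℝ≥0∞ :=
  sInf {x : ℝ≥0∞ | ∃ r : ℕ, x = (r : ℝ≥0∞) ∧ 1 ≤ r ∧ cond r ω}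

namespace MDSAux

variable (n : ℕ) (i : Fin n)

/-- `i`-avoiding tuples of length `r` with exactly `d` distinct values. -/
def A (r d : ℕ) : Finset (Fin r → Fin n) :=
  Finset.univ.filter (fun a => (∀ j, a j ≠ i) ∧ (Finset.univ.image a).card = d)

lemma mem_A_iff {r d : ℕ} (a : Fin r → Fin n) :
    a ∈ A n i r d ↔ (∀ j, a j ≠ i) ∧ (Finset.univ.image a).card = d := by
  simp [A]

lemma cardA_zero_zero : (A n i 0 0).card = 1 := by
  rw [A, Finset.filter_true_of_mem, Finset.card_univ]
  · simp
  · intro a _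
    exact ⟨fun j => j.elim0, by simp [Finset.univ_eq_empty]⟩

lemma cardA_zero_succ (d : ℕ) : (A n i 0 (d+1)).card = 0 := by
  rw [A, Finset.card_eq_zero]
  ext a
  simp only [mem_filter, mem_univ, true_and, notMem_empty, iff_false, not_and]
  intro _
  simp [Finset.univ_eq_empty]

lemma cardA_succ_zero (r : ℕ) : (A n i (r+1) 0).card = 0 := by
  rw [A, Finset.card_eq_zero]
  ext a
  simp only [mem_filter, mem_univ, true_and, notMem_empty, iff_false, not_and]
  intro _
  intro h
  have : (0:Fin (r+1)) ∈ (Finset.univ : Finset (Fin (r+1))) := mem_univ _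
  have : a 0 ∈ Finset.univ.image a := mem_image_of_mem a this
  rw [Finset.card_eq_zero] at h
  simp [h] at this

lemma image_succ {r : ℕ} (a : Fin (r+1) → Fin n) :
    Finset.univ.image a = insert (a (Fin.last r)) (Finset.univ.image (Fin.init a)) := by
  rw [Fin.univ_castSuccEmb, Finset.cons_eq_insert, Finset.image_insert, Finset.map_eq_image,
    Finset.image_image]
  rfl

lemma fiber_eq (r d : ℕ) (b : Fin r → Fin n) :
    (A n i (r+1) (d+1)).filter (fun a => Fin.init a = b) =
      (Finset.univ.filter (fun v : Fin n =>
        v ≠ i ∧ (∀ j, b j ≠ i) ∧ (insert v (Finset.univ.image b)).card = d + 1)).image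
        (Fin.snoc b) := by
  ext a
  simp only [mem_filter, mem_image, mem_A_iff, mem_univ, true_and]
  constructor
  · rintro ⟨⟨havoid, hcard⟩, hinit⟩
    refine ⟨a (Fin.last r), ⟨havoid _, fun j => ?_, ?_⟩, ?_⟩
    · have := havoid (Fin.castSucc j)
      rwa [show a (Fin.castSucc j) = b j from by rw [← hinit]; rfl] at this
    · rw [← hinit, ← image_succ, hcard]
    · rw [← hinit, Fin.snoc_init_self]
  · rintro ⟨v, ⟨hv, hbav, hcard⟩, rfl⟩
    refine ⟨⟨?_, ?_⟩, Fin.init_snoc _ _⟩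
    · intro j
      refine Fin.lastCases ?_ ?_ j
      · simpa using hv
      · intro j'; simpa using hbav j'
    · rw [image_succ, Fin.init_snoc, Fin.snoc_last]
      exact hcard

lemma snoc_inj {r : ℕ} (b : Fin r → Fin n) :
    Function.Injective (fun v : Fin n => (Fin.snoc b v : Fin (r+1) → Fin n)) := by
  intro v w h
  have := congrFun h (Fin.last r)
  simpa using this

lemma fiber_card (r d : ℕ) (b : Fin r → Fin n) :
    ((A n i (r+1) (d+1)).filter (fun a => Fin.init a = b)).card =
      (if b ∈ A n i r (d+1) then d+1 else 0) + (if b ∈ A n i r d then n-1-d else 0) := by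
  rw [fiber_eq, Finset.card_image_of_injective _ (snoc_inj n b)]
  by_cases h1 : b ∈ A n i r (d+1)
  · rw [mem_A_iff] at h1
    obtain ⟨hav, hcard⟩ := h1
    have hno : ¬ (b ∈ A n i r d) := by
      rw [mem_A_iff]; rintro ⟨-, h⟩; omega
    rw [if_pos (by rw [mem_A_iff]; exact ⟨hav, hcard⟩), if_neg hno, add_zero]
    have : (Finset.univ.filter (fun v : Fin n =>
        v ≠ i ∧ (∀ j, b j ≠ i) ∧ (insert v (Finset.univ.image b)).card = d + 1)) =
        Finset.univ.image b := by
      ext v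
      simp only [mem_filter, mem_univ, true_and]
      constructor
      · rintro ⟨hv, -, hc⟩
        by_contra hvmem
        rw [Finset.card_insert_of_notMem hvmem, hcard] at hc
        omega
      · intro hv
        refine ⟨?_, hav, ?_⟩
        · obtain ⟨j, -, rfl⟩ := Finset.mem_image.mp hv
          exact hav j
        · rw [Finset.insert_eq_self.mpr hv, hcard]
    rw [this, hcard]
  · by_cases h0 : b ∈ A n i r d
    · rw [mem_A_iff] at h0
      obtain ⟨hav, hcard⟩ := h0
      rw [if_neg h1, if_pos (by rw [mem_A_iff]; exact ⟨hav, hcard⟩), zero_add]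
      have hinotmem : i ∉ Finset.univ.image b := by
        intro hmem
        obtain ⟨j, -, hj⟩ := Finset.mem_image.mp hmem
        exact hav j hj
      have : (Finset.univ.filter (fun v : Fin n =>
          v ≠ i ∧ (∀ j, b j ≠ i) ∧ (insert v (Finset.univ.image b)).card = d + 1)) =
          Finset.univ \ insert i (Finset.univ.image b) := by
        ext v
        simp only [mem_filter, mem_univ, true_and, Finset.mem_sdiff, Finset.mem_insert]
        constructor
        · rintro ⟨hv, -, hc⟩
          rintro (rfl | hvmem)
          · exact hv rfl
          · rw [Finset.insert_eq_self.mpr hvmem, hcard] at hc; omega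
        · intro hv
          push_neg at hv
          refine ⟨hv.1, hav, ?_⟩
          rw [Finset.card_insert_of_notMem hv.2, hcard]
      rw [this, Finset.card_sdiff_of_subset (Finset.subset_univ _),
        Finset.card_insert_of_notMem hinotmem, hcard, Finset.card_univ, Fintype.card_fin]
      omega
    · rw [if_neg h1, if_neg h0, add_zero]
      rw [Finset.card_eq_zero, Finset.filter_eq_empty_iff]
      rintro v -
      rintro ⟨hv, hav, hc⟩
      by_cases hvmem : v ∈ Finset.univ.image b
      · rw [Finset.insert_eq_self.mpr hvmem] at hc
        exact h1 ((mem_A_iff n i b).mpr ⟨hav, hc⟩)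
      · rw [Finset.card_insert_of_notMem hvmem] at hc
        exact h0 ((mem_A_iff n i b).mpr ⟨hav, by omega⟩)

lemma cardA_rec (r d : ℕ) :
    (A n i (r+1) (d+1)).card =
      (d+1) * (A n i r (d+1)).card + (n-1-d) * (A n i r d).card := by
  rw [Finset.card_eq_sum_card_fiberwise
    (f := fun a : Fin (r+1) → Fin n => Fin.init a) (t := Finset.univ) (fun _ _ => mem_univ _)]
  have : ∀ b ∈ (Finset.univ : Finset (Fin r → Fin n)),
      ((A n i (r+1) (d+1)).filter (fun a => Fin.init a = b)).card =
      (if b ∈ A n i r (d+1) then d+1 else 0) + (if b ∈ A n i r d then n-1-d else 0) :=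
    fun b _ => fiber_card n i r d b
  rw [Finset.sum_congr rfl this, Finset.sum_add_distrib]
  congr 1
  · rw [Finset.sum_ite_mem, Finset.univ_inter, Finset.sum_const, smul_eq_mul, mul_comm]
  · rw [Finset.sum_ite_mem, Finset.univ_inter, Finset.sum_const, smul_eq_mul, mul_comm]

lemma cardA_le (r d : ℕ) : (A n i r d).card ≤ (n-1).choose d * d^r := by
  have hsub : A n i r d ⊆ (Finset.powersetCard d (Finset.univ.erase i)).biUnion
      (fun s => Fintype.piFinset (fun _ : Fin r => s)) := by
    intro a ha
    rw [A, mem_filter] at ha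
    obtain ⟨-, hav, hcard⟩ := ha
    rw [Finset.mem_biUnion]
    refine ⟨Finset.univ.image a, ?_, ?_⟩
    · rw [Finset.mem_powersetCard]
      refine ⟨?_, hcard⟩
      intro v hv
      obtain ⟨j, -, rfl⟩ := Finset.mem_image.mp hv
      exact Finset.mem_erase.mpr ⟨hav j, mem_univ _⟩
    · rw [Fintype.mem_piFinset]
      intro j
      exact Finset.mem_image_of_mem a (mem_univ j)
  calc (A n i r d).card ≤ _ := Finset.card_le_card hsub
    _ ≤ ∑ s ∈ Finset.powersetCard d (Finset.univ.erase i),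
        (Fintype.piFinset (fun _ : Fin r => s)).card := Finset.card_biUnion_le
    _ ≤ (n-1).choose d * d^r := by
      have : ∀ s ∈ Finset.powersetCard d (Finset.univ.erase i),
          (Fintype.piFinset (fun _ : Fin r => s)).card = d ^ r := by
        intro s hs
        rw [Fintype.card_piFinset]
        rw [Finset.mem_powersetCard] at hs
        rw [Finset.prod_const, hs.2, Finset.card_univ, Fintype.card_fin]
      rw [Finset.sum_congr rfl this, Finset.sum_const, smul_eq_mul,
        Finset.card_powersetCard, Finset.card_erase_of_mem (mem_univ i),
        Finset.card_univ, Fintype.card_fin]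

/-- the generating value `∑_r c(r,d) n^{-r}` -/
noncomputable def S (d : ℕ) : ℝ≥0∞ :=
  ∑' r : ℕ, ((A n i r d).card : ℝ≥0∞) * ((n : ℝ≥0∞))⁻¹ ^ r

lemma S_lt_top (d : ℕ) (hd : d < n) : S n i d < ⊤ := by
  have hbound : S n i d ≤ ∑' r : ℕ,
      (((n-1).choose d : ℝ≥0∞)) * ((d : ℝ≥0∞) * ((n : ℝ≥0∞))⁻¹) ^ r := by
    apply ENNReal.tsum_le_tsum
    intro r
    rw [mul_pow, ← mul_assoc]
    gcongr
    calc ((A n i r d).card : ℝ≥0∞) ≤ (((n-1).choose d * d^r : ℕ) : ℝ≥0∞) := by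
          exact_mod_cast Nat.cast_le.mpr (cardA_le n i r d)
      _ = ((n-1).choose d : ℝ≥0∞) * (d : ℝ≥0∞) ^ r := by push_cast; ring
  rw [ENNReal.tsum_mul_left, ENNReal.tsum_geometric] at hbound
  refine lt_of_le_of_lt hbound (ENNReal.mul_lt_top (by simp) ?_)
  rw [ENNReal.inv_lt_top]
  have hn0 : (n : ℝ≥0∞) ≠ 0 := by exact_mod_cast Nat.cast_ne_zero.mpr (by omega)
  have hlt : (d : ℝ≥0∞) * ((n : ℝ≥0∞))⁻¹ < 1 := by
    rw [← div_eq_mul_inv, ENNReal.div_lt_iff (Or.inl hn0) (Or.inl (by simp)), one_mul]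
    exact_mod_cast hd
  exact tsub_pos_of_lt hlt

lemma S_zero (hn : 0 < n) : S n i 0 = 1 := by
  rw [S, tsum_eq_single 0]
  · rw [cardA_zero_zero]; simp
  · intro r hr
    obtain ⟨r', rfl⟩ := Nat.exists_eq_succ_of_ne_zero hr
    rw [cardA_succ_zero]; simp

lemma S_eq_one (d : ℕ) (hd : d < n) : S n i d = 1 := by
  induction d with
  | zero => exact S_zero n i (by omega)
  | succ d ih =>
    have hdn : d < n := by omega
    have hSd : S n i d = 1 := ih hdn
    have hfin : S n i (d+1) ≠ ⊤ := (S_lt_top n i (d+1) hd).ne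
    have hn0 : (n : ℝ≥0∞) ≠ 0 := by exact_mod_cast Nat.cast_ne_zero.mpr (by omega)
    have hnt : (n : ℝ≥0∞) ≠ ⊤ := by simp
    have hrec : S n i (d+1) =
        (((d+1 : ℕ)) : ℝ≥0∞) * (n : ℝ≥0∞)⁻¹ * S n i (d+1)
          + ((n-1-d : ℕ) : ℝ≥0∞) * (n : ℝ≥0∞)⁻¹ := by
      conv_lhs => rw [S, tsum_eq_zero_add' ENNReal.summable]
      rw [cardA_zero_succ]
      simp only [Nat.cast_zero, zero_mul, zero_add]
      have : ∀ r : ℕ, ((A n i (r+1) (d+1)).card : ℝ≥0∞) * ((n : ℝ≥0∞))⁻¹ ^ (r+1)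
          = (((d+1 : ℕ)) : ℝ≥0∞) * (n : ℝ≥0∞)⁻¹
              * (((A n i r (d+1)).card : ℝ≥0∞) * ((n : ℝ≥0∞))⁻¹ ^ r)
            + ((n-1-d : ℕ) : ℝ≥0∞) * (n : ℝ≥0∞)⁻¹
              * (((A n i r d).card : ℝ≥0∞) * ((n : ℝ≥0∞))⁻¹ ^ r) := by
        intro r
        rw [cardA_rec]
        push_cast
        ring
      rw [tsum_congr this, ENNReal.tsum_add, ENNReal.tsum_mul_left, ENNReal.tsum_mul_left]
      rw [← S, ← S, hSd, mul_one]
    set s : ℝ := (S n i (d+1)).toReal with hs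
    have hnR : (0:ℝ) < n := by exact_mod_cast Nat.pos_of_ne_zero (by omega)
    have hinvt : ((n : ℝ≥0∞))⁻¹ ≠ ⊤ := ENNReal.inv_ne_top.mpr hn0
    have hsrec : s = (((d+1:ℕ)):ℝ) * (n:ℝ)⁻¹ * s + ((n-1-d : ℕ) : ℝ) * (n:ℝ)⁻¹ := by
      rw [hs]
      conv_lhs => rw [hrec]
      rw [ENNReal.toReal_add
        (ENNReal.mul_ne_top (ENNReal.mul_ne_top (by simp) hinvt) hfin)
        (ENNReal.mul_ne_top (by simp) hinvt)]
      simp only [ENNReal.toReal_mul, ENNReal.toReal_natCast, ENNReal.toReal_inv]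
    have hcast : ((n-1-d : ℕ) : ℝ) = (n:ℝ) - (d:ℝ) - 1 := by
      have : n - 1 - d = n - (d+1) := by omega
      rw [this, Nat.cast_sub (by omega)]
      push_cast; ring
    have hs1 : s = 1 := by
      rw [hcast] at hsrec
      push_cast at hsrec
      have h2 : s * (n:ℝ) = ((d:ℝ)+1) * s + ((n:ℝ) - d - 1) := by
        have := congrArg (fun t => t * (n:ℝ)) hsrec
        rw [this]
        field_simp
      have h3 : (s - 1) * ((n:ℝ) - d - 1) = 0 := by nlinarith
      have h4 : (n:ℝ) - d - 1 ≠ 0 := by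
        have : (d:ℝ) + 1 < n := by exact_mod_cast hd
        nlinarith
      rcases mul_eq_zero.mp h3 with h | h
      · linarith [sub_eq_zero.mp h]
      · exact absurd h h4
    have : (S n i (d+1)).toReal = (1 : ℝ≥0∞).toReal := by simp [← hs, hs1]
    exact (ENNReal.toReal_eq_toReal_iff' hfin (by simp)).mp this

end MDSAux

namespace MDSMeas

lemma min_firstTime {Ω : Type*} (c1 c2 : ℕ → Ω → Prop) (ω : Ω) :
    min (firstTime c1 ω) (firstTime c2 ω) = firstTime (fun r ω => c1 r ω ∨ c2 r ω) ω := by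
  rw [firstTime, firstTime, firstTime, ← sInf_union]
  congr 1
  ext x
  simp only [Set.mem_union, Set.mem_setOf_eq]
  constructor
  · rintro (⟨r, rfl, hr, hc⟩ | ⟨r, rfl, hr, hc⟩)
    · exact ⟨r, rfl, hr, Or.inl hc⟩
    · exact ⟨r, rfl, hr, Or.inr hc⟩
  · rintro ⟨r, rfl, hr, hc | hc⟩
    · exact Or.inl ⟨r, rfl, hr, hc⟩
    · exact Or.inr ⟨r, rfl, hr, hc⟩

lemma firstTime_eq_tsum {Ω : Type*} (cond : ℕ → Ω → Prop) (ω : Ω)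
    (hmono : ∀ r, cond r ω → cond (r+1) ω) (h0 : ¬ cond 0 ω) :
    firstTime cond ω = ∑' r : ℕ, Set.indicator {ω' | ¬ cond r ω'} (1 : Ω → ℝ≥0∞) ω := by
  by_cases hex : ∃ m, cond m ω
  · classical
    set m := Nat.find hex with hm
    have hspec : cond m ω := Nat.find_spec hex
    have hmono' : ∀ r, m ≤ r → cond r ω := by
      intro r hr
      induction r with
      | zero => rwa [Nat.le_zero.mp hr] at hspec
      | succ r' ih =>
        rcases Nat.lt_or_ge m (r'+1) with h | h
        · exact hmono r' (ih (by omega))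
        · rwa [Nat.le_antisymm hr h] at hspec
    have hiff : ∀ r, (¬ cond r ω) ↔ r < m := by
      intro r
      constructor
      · intro h; by_contra hn; exact h (hmono' r (by omega))
      · intro h; exact Nat.find_min hex h
    have hm1 : 1 ≤ m := by
      rcases Nat.eq_zero_or_pos m with h | h
      · exact absurd (h ▸ hspec) h0
      · exact h
    have hL : firstTime cond ω = (m : ℝ≥0∞) := by
      apply le_antisymm
      · exact sInf_le ⟨m, rfl, hm1, hspec⟩
      · apply le_sInf
        rintro x ⟨r, rfl, -, hr⟩
        exact_mod_cast Nat.find_min' hex hr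
    rw [hL, tsum_eq_sum (s := Finset.range m) (fun r hr => by
      rw [Set.indicator_of_notMem]
      simp only [Set.mem_setOf_eq, not_not]
      exact hmono' r (by simpa using hr))]
    rw [Finset.sum_congr rfl (fun r hr => by
      rw [Set.indicator_of_mem]
      exact (hiff r).mpr (by simpa using hr))]
    simp
  · push_neg at hex
    have hL : firstTime cond ω = ⊤ := by
      rw [firstTime]
      refine (congrArg sInf (?_ : _ = (∅ : Set ℝ≥0∞))).trans sInf_empty
      ext x
      simp only [Set.mem_setOf_eq, Set.mem_empty_iff_false, iff_false]
      rintro ⟨r, rfl, -, hr⟩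
      exact hex r hr
    have hind : ∀ r : ℕ, Set.indicator {ω' | ¬ cond r ω'} (1 : Ω → ℝ≥0∞) ω = 1 := by
      intro r
      have hmem : ω ∈ {ω' | ¬ cond r ω'} := hex r
      simp [Set.indicator_of_mem hmem]
    rw [hL, tsum_congr hind]
    exact (ENNReal.tsum_const_eq_top_of_ne_zero one_ne_zero).symm

variable {n : ℕ}

lemma measurable_cyl (m : ℕ) (a : Fin m → Fin n) :
    MeasurableSet {ω : ℕ → Fin n | ∀ j : Fin m, ω (j : ℕ) = a j} := by
  have : {ω : ℕ → Fin n | ∀ j : Fin m, ω (j : ℕ) = a j}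
      = ⋂ j : Fin m, (fun ω : ℕ → Fin n => ω (j : ℕ)) ⁻¹' {a j} := by
    ext ω; simp [Set.mem_iInter]
  rw [this]
  exact MeasurableSet.iInter (fun j =>
    (measurable_pi_apply (j : ℕ)) (measurableSet_singleton (a j)))

lemma tuple_event_eq (m : ℕ) (A : Finset (Fin m → Fin n)) :
    {ω : ℕ → Fin n | (fun j : Fin m => ω (j : ℕ)) ∈ A}
      = ⋃ a ∈ A, {ω : ℕ → Fin n | ∀ j : Fin m, ω (j : ℕ) = a j} := by
  ext ω
  simp only [Set.mem_setOf_eq, Set.mem_iUnion]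
  constructor
  · intro h
    exact ⟨fun j => ω (j : ℕ), h, fun j => rfl⟩
  · rintro ⟨a, ha, h⟩
    have : (fun j : Fin m => ω (j : ℕ)) = a := funext h
    rwa [this]

lemma measurable_tuple_event (m : ℕ) (A : Finset (Fin m → Fin n)) :
    MeasurableSet {ω : ℕ → Fin n | (fun j : Fin m => ω (j : ℕ)) ∈ A} := by
  rw [tuple_event_eq]
  exact MeasurableSet.biUnion A.countable_toSet (fun a _ => measurable_cyl m a)

lemma measure_tuple_event (μ : Measure (ℕ → Fin n))
    (hμ : ∀ (m : ℕ) (a : Fin m → Fin n),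
      μ {ω : ℕ → Fin n | ∀ i : Fin m, ω (i : ℕ) = a i} = ∏ _i : Fin m, ((n : ℝ≥0∞))⁻¹)
    (m : ℕ) (A : Finset (Fin m → Fin n)) :
    μ {ω : ℕ → Fin n | (fun j : Fin m => ω (j : ℕ)) ∈ A}
      = A.card * ((n : ℝ≥0∞))⁻¹ ^ m := by
  rw [tuple_event_eq]
  rw [measure_biUnion_finset ?hd (fun a _ => measurable_cyl m a)]
  · rw [Finset.sum_congr rfl (fun a _ => hμ m a)]
    simp [Finset.prod_const, mul_comm]
  · rintro a ha b hb hab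
    simp only [Function.onFun]
    rw [Set.disjoint_left]
    rintro ω h1 h2
    exact hab (funext (fun j => ((h1 j).symm.trans (h2 j))))

end MDSMeas

theorem systematic_mds_expected_retrieval_time (n k : ℕ) (hkn : k ≤ n) (hnk : n < 2 * k)
    (μ : Measure (ℕ → Fin n))
    (hμ : ∀ (m : ℕ) (a : Fin m → Fin n),
      μ {ω : ℕ → Fin n | ∀ i : Fin m, ω (i : ℕ) = a i} = ∏ _i : Fin m, ((n : ℝ≥0∞))⁻¹)
    (i : Fin n) :
    ∫⁻ ω, min (firstTime (fun r ω => ∃ j : Fin r, ω (j : ℕ) = i) ω)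
        (firstTime
          (fun r ω => k ≤ ((Finset.univ : Finset (Fin r)).image (fun j => ω (j : ℕ))).card) ω)
      ∂μ = (k : ℝ≥0∞) := by
  classical
  have hn : 0 < n := i.pos
  have hk : 0 < k := by omega
  have hE : ∀ r : ℕ, {ω' : ℕ → Fin n | ¬ ((∃ j : Fin r, ω' (j : ℕ) = i) ∨
        k ≤ ((Finset.univ : Finset (Fin r)).image (fun j : Fin r => ω' (j : ℕ))).card)}
      = {ω : ℕ → Fin n | (fun j : Fin r => ω (j : ℕ)) ∈
          Finset.univ.filter (fun a : Fin r → Fin n =>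
            (∀ j, a j ≠ i) ∧ (Finset.univ.image a).card < k)} := by
    intro r
    ext ω
    simp only [Set.mem_setOf_eq, Finset.mem_filter, Finset.mem_univ, true_and,
      not_or, not_exists, not_le]
  have hpt : ∀ ω : ℕ → Fin n,
      min (firstTime (fun r ω => ∃ j : Fin r, ω (j : ℕ) = i) ω)
        (firstTime
          (fun r ω => k ≤ ((Finset.univ : Finset (Fin r)).image (fun j : Fin r => ω (j : ℕ))).card) ω)
      = ∑' r : ℕ, Set.indicator {ω' : ℕ → Fin n | ¬ ((∃ j : Fin r, ω' (j : ℕ) = i) ∨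
          k ≤ ((Finset.univ : Finset (Fin r)).image (fun j : Fin r => ω' (j : ℕ))).card)}
          (1 : (ℕ → Fin n) → ℝ≥0∞) ω := by
    intro ω
    rw [MDSMeas.min_firstTime]
    apply MDSMeas.firstTime_eq_tsum
    · intro r h
      rcases h with ⟨j, hj⟩ | h
      · exact Or.inl ⟨j.castSucc, by simpa using hj⟩
      · refine Or.inr (le_trans h (Finset.card_le_card ?_))
        intro v hv
        obtain ⟨j, -, rfl⟩ := Finset.mem_image.mp hv
        exact Finset.mem_image.mpr ⟨j.castSucc, Finset.mem_univ _, by simp⟩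
    · rintro (⟨j, -⟩ | h)
      · exact j.elim0
      · rw [Finset.univ_eq_empty, Finset.image_empty, Finset.card_empty] at h
        omega
  have hmeasble : ∀ r : ℕ, MeasurableSet {ω' : ℕ → Fin n | ¬ ((∃ j : Fin r, ω' (j : ℕ) = i) ∨
        k ≤ ((Finset.univ : Finset (Fin r)).image (fun j : Fin r => ω' (j : ℕ))).card)} := by
    intro r
    rw [hE r]
    exact MDSMeas.measurable_tuple_event r _
  rw [lintegral_congr hpt]
  rw [lintegral_tsum (f := fun r : ℕ => Set.indicator {ω' : ℕ → Fin n |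
      ¬ ((∃ j : Fin r, ω' (j : ℕ) = i) ∨
        k ≤ ((Finset.univ : Finset (Fin r)).image (fun j : Fin r => ω' (j : ℕ))).card)}
      (1 : (ℕ → Fin n) → ℝ≥0∞))
    (fun r => ((measurable_const.indicator (hmeasble r)).aemeasurable))]
  have hint : ∀ r : ℕ, ∫⁻ ω, Set.indicator {ω' : ℕ → Fin n | ¬ ((∃ j : Fin r, ω' (j : ℕ) = i) ∨
        k ≤ ((Finset.univ : Finset (Fin r)).image (fun j : Fin r => ω' (j : ℕ))).card)}
          (1 : (ℕ → Fin n) → ℝ≥0∞) ω ∂μ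
      = ((Finset.univ.filter (fun a : Fin r → Fin n =>
            (∀ j, a j ≠ i) ∧ (Finset.univ.image a).card < k)).card : ℝ≥0∞)
          * ((n : ℝ≥0∞))⁻¹ ^ r := by
    intro r
    rw [lintegral_indicator_one (hmeasble r), hE r]
    exact MDSMeas.measure_tuple_event μ hμ r _
  rw [tsum_congr hint]
  have hcardbad : ∀ r : ℕ, (Finset.univ.filter (fun a : Fin r → Fin n =>
        (∀ j, a j ≠ i) ∧ (Finset.univ.image a).card < k)).card
      = ∑ d ∈ Finset.range k, (MDSAux.A n i r d).card := by
    intro r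
    rw [Finset.card_eq_sum_card_fiberwise
      (f := fun a : Fin r → Fin n => (Finset.univ.image a).card) (t := Finset.range k)
      (fun a ha => by
        rw [Finset.mem_coe, Finset.mem_filter] at ha
        exact Finset.mem_range.mpr ha.2.2)]
    apply Finset.sum_congr rfl
    intro d hd
    congr 1
    ext a
    rw [MDSAux.mem_A_iff]
    simp only [Finset.mem_filter, Finset.mem_univ, true_and]
    constructor
    · rintro ⟨⟨h1, -⟩, h2⟩; exact ⟨h1, h2⟩
    · rintro ⟨h1, h2⟩
      exact ⟨⟨h1, h2 ▸ Finset.mem_range.mp hd⟩, h2⟩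
  have hterm : ∀ r : ℕ, ((Finset.univ.filter (fun a : Fin r → Fin n =>
        (∀ j, a j ≠ i) ∧ (Finset.univ.image a).card < k)).card : ℝ≥0∞) * ((n : ℝ≥0∞))⁻¹ ^ r
      = ∑ d ∈ Finset.range k, ((MDSAux.A n i r d).card : ℝ≥0∞) * ((n : ℝ≥0∞))⁻¹ ^ r := by
    intro r
    rw [hcardbad r, ← Finset.sum_mul]
    congr 1
    push_cast
    rfl
  rw [tsum_congr hterm, Summable.tsum_finsetSum (fun d _ => ENNReal.summable)]
  have : ∀ d ∈ Finset.range k,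
      ∑' r : ℕ, ((MDSAux.A n i r d).card : ℝ≥0∞) * ((n : ℝ≥0∞))⁻¹ ^ r = 1 := by
    intro d hd
    exact MDSAux.S_eq_one n i d (by have := Finset.mem_range.mp hd; omega)
  rw [Finset.sum_congr rfl this, Finset.sum_const, Finset.card_range, nsmul_eq_mul, mul_one]
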